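/- Assume f is convex, L-Lipschitz and β-smooth, and for every t ∈ {1,…,T} and i ∈ {1,…,m} the diagonal entries satisfy P^t_{ii} > 0 and η_t ≤ 2P^t_{ii}/β. Then the r-th local model of time-varying D-SGD satisfies, for every z ∈ 𝒵, |f(w^{T+1}(r); z) − f(v^{T+1}(r); z)| ≤ 2L² ∑_{t=1}^T Q^{(t)}_{rr} η_t 𝟙[j_t(r)=k], where Q^{(t)} = P^T P^{T−1} ⋯ P^{t+1} (with Q^{(T)} the identity matrix). -/

import Mathlib

open Set RealInnerProductSpace



section aux
variable {H : Type*} [NormedAddCommGroup H] [InnerProductSpace ℝ H]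
  (g : H → ℝ) (g' : H → H) (β : ℝ) (hβ : 0 < β)
  (hdiff : ∀ x : H, HasFDerivAt g ((innerSL ℝ) (g' x)) x)
  (hsmooth : ∀ x y : H, ‖g' x - g' y‖ ≤ β * ‖x - y‖)

lemma line_hasDerivAt (x d : H) (t : ℝ) :
    HasDerivAt (fun s : ℝ => x + s • d) d t := by
  have h := ((hasDerivAt_id t).smul_const d).const_add x
  simpa using h

include hdiff in
lemma phi_hasDerivAt (x d : H) (t : ℝ) :
    HasDerivAt (fun s : ℝ => g (x + s • d)) (⟪g' (x + t • d), d⟫) t := by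
  have h := (hdiff (x + t • d)).comp_hasDerivAt t (line_hasDerivAt x d t)
  simpa [Function.comp_def] using h

include hβ hdiff hsmooth in
lemma descent_lemma (x u : H) :
    g u ≤ g x + (⟪g' x, u - x⟫) + β / 2 * ‖u - x‖ ^ 2 := by
  set d := u - x with hd
  set ψ : ℝ → ℝ := fun t => g (x + t • d) - t * ⟪g' x, d⟫ - β / 2 * t ^ 2 * ‖d‖ ^ 2
    with hψdef
  have hψ : ∀ t : ℝ, HasDerivAt ψ
      (⟪g' (x + t • d), d⟫ - ⟪g' x, d⟫ - β / 2 * (2 * t) * ‖d‖ ^ 2) t := by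
    intro t
    have h1 := phi_hasDerivAt g g' hdiff x d t
    have h2 : HasDerivAt (fun s : ℝ => s * ⟪g' x, d⟫) ⟪g' x, d⟫ t := by
      simpa using (hasDerivAt_id t).mul_const ⟪g' x, d⟫
    have h3 : HasDerivAt (fun s : ℝ => β / 2 * s ^ 2 * ‖d‖ ^ 2)
        (β / 2 * (2 * t) * ‖d‖ ^ 2) t := by
      have := ((hasDerivAt_pow 2 t).const_mul (β / 2)).mul_const (‖d‖ ^ 2)
      simpa [mul_comm, mul_assoc, mul_left_comm] using this
    exact (h1.sub h2).sub h3
  have hmono : ψ 1 ≤ ψ 0 := by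
    have hanti : AntitoneOn ψ (Icc (0:ℝ) 1) := by
      apply antitoneOn_of_deriv_nonpos (convex_Icc 0 1)
      · exact fun t _ => ((hψ t).differentiableAt.continuousAt).continuousWithinAt
      · exact fun t _ => ((hψ t).differentiableAt).differentiableWithinAt
      · intro t ht
        rw [interior_Icc] at ht
        rw [(hψ t).deriv]
        have hb : ⟪g' (x + t • d) - g' x, d⟫ ≤ β * t * ‖d‖ ^ 2 := by
          calc ⟪g' (x + t • d) - g' x, d⟫ ≤ ‖g' (x + t • d) - g' x‖ * ‖d‖ :=
                real_inner_le_norm _ _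
            _ ≤ (β * ‖(x + t • d) - x‖) * ‖d‖ := by
                have := hsmooth (x + t • d) x
                nlinarith [norm_nonneg d]
            _ = β * t * ‖d‖ ^ 2 := by
                rw [add_sub_cancel_left, norm_smul]
                simp [abs_of_pos ht.1]
                ring
        have : ⟪g' (x + t • d), d⟫ - ⟪g' x, d⟫ = ⟪g' (x + t • d) - g' x, d⟫ := by
          rw [inner_sub_left]
        linarith [hb, this.symm.le]
    exact hanti (by norm_num) (by norm_num) (by norm_num)
  have h0 : ψ 0 = g x := by simp [hψdef]
  have h1 : ψ 1 = g u - ⟪g' x, d⟫ - β / 2 * ‖d‖ ^ 2 := by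
    simp [hψdef, hd]
  rw [h0, h1] at hmono
  linarith


include hdiff in
lemma first_order (hconv : ConvexOn ℝ Set.univ g) (y u : H) :
    g y + ⟪g' y, u - y⟫ ≤ g u := by
  set φ : ℝ → ℝ := fun t => g (y + t • (u - y)) with hφdef
  have hφconv : ConvexOn ℝ Set.univ φ := by
    have haff : ConvexOn ℝ ((AffineMap.lineMap y u : ℝ →ᵃ[ℝ] H) ⁻¹' Set.univ)
        (g ∘ (AffineMap.lineMap y u : ℝ →ᵃ[ℝ] H)) := hconv.comp_affineMap _
    have : (g ∘ (AffineMap.lineMap y u : ℝ →ᵃ[ℝ] H)) = φ := by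
      funext t
      simp [hφdef, AffineMap.lineMap_apply, vsub_eq_sub, vadd_eq_add, add_comm]
    rwa [Set.preimage_univ, this] at haff
  have hφ0 : HasDerivAt φ (⟪g' y, u - y⟫) 0 := by
    have := phi_hasDerivAt g g' hdiff y (u - y) 0
    simpa using this
  have hslope := hφconv.le_slope_of_hasDerivAt (Set.mem_univ (0:ℝ)) (Set.mem_univ (1:ℝ))
    one_pos hφ0
  rw [slope_def_field] at hslope
  have h1 : φ 1 = g u := by simp [hφdef]
  have h0 : φ 0 = g y := by simp [hφdef]
  rw [h1, h0] at hslope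
  have : (g u - g y) / (1 - 0) = g u - g y := by norm_num
  rw [this] at hslope
  linarith

include hβ hdiff hsmooth in
lemma half_coco (hconv : ConvexOn ℝ Set.univ g) (x y : H) :
    g y - g x ≤ ⟪g' y, y - x⟫ - 1 / (2 * β) * ‖g' x - g' y‖ ^ 2 := by
  set Δ := g' x - g' y with hΔ
  set u := x - (1 / β) • Δ with hu
  have hdsc := descent_lemma g g' β hβ hdiff hsmooth x u
  have hfo := first_order g g' hdiff hconv y u
  have hux : u - x = -((1 / β) • Δ) := by rw [hu]; abel
  have huy : u - y = (x - y) - (1 / β) • Δ := by rw [hu]; abel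
  rw [hux] at hdsc
  rw [huy] at hfo
  have e1 : ⟪g' x, -((1 / β) • Δ)⟫ = -(1 / β) * ⟪g' x, Δ⟫ := by
    rw [inner_neg_right, real_inner_smul_right]; ring
  have e2 : ‖-((1 / β) • Δ)‖ ^ 2 = (1 / β) ^ 2 * ‖Δ‖ ^ 2 := by
    rw [norm_neg, norm_smul, Real.norm_eq_abs, abs_of_pos (by positivity : (0:ℝ) < 1 / β)]
    ring
  have e3 : ⟪g' y, (x - y) - (1 / β) • Δ⟫ = ⟪g' y, x - y⟫ - (1 / β) * ⟪g' y, Δ⟫ := by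
    rw [inner_sub_right, real_inner_smul_right]
  rw [e1, e2] at hdsc
  rw [e3] at hfo
  have e4 : ⟪g' y, Δ⟫ - ⟪g' x, Δ⟫ = -‖Δ‖ ^ 2 := by
    rw [hΔ]
    have : ⟪g' y, g' x - g' y⟫ - ⟪g' x, g' x - g' y⟫ = -⟪g' x - g' y, g' x - g' y⟫ := by
      rw [← inner_sub_left]
      have : g' y - g' x = -(g' x - g' y) := by abel
      rw [this, inner_neg_left]
    rw [this, real_inner_self_eq_norm_sq]
  have e5 : ⟪g' y, x - y⟫ = -⟪g' y, y - x⟫ := by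
    have : x - y = -(y - x) := by abel
    rw [this, inner_neg_right]
  have hβ' : (0:ℝ) < 1 / β := by positivity
  have e4' : 1 / β * ⟪g' y, Δ⟫ - 1 / β * ⟪g' x, Δ⟫ = -(1 / β * ‖Δ‖ ^ 2) := by
    rw [← mul_sub, e4]; ring
  have hfield : β / 2 * ((1 / β) ^ 2 * ‖Δ‖ ^ 2) = 1 / (2 * β) * ‖Δ‖ ^ 2 := by
    field_simp
  have hfield2 : 1 / β * ‖Δ‖ ^ 2 - 1 / (2 * β) * ‖Δ‖ ^ 2 = 1 / (2 * β) * ‖Δ‖ ^ 2 := by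
    field_simp; ring
  linarith [hdsc, hfo, e4', e5, hfield, hfield2]

include hβ hdiff hsmooth in
lemma coco (hconv : ConvexOn ℝ Set.univ g) (x y : H) :
    ‖g' x - g' y‖ ^ 2 ≤ β * ⟪g' x - g' y, x - y⟫ := by
  have h1 := half_coco g g' β hβ hdiff hsmooth hconv x y
  have h2 := half_coco g g' β hβ hdiff hsmooth hconv y x
  have hrev : ‖g' y - g' x‖ = ‖g' x - g' y‖ := norm_sub_rev _ _
  rw [hrev] at h2
  have e : ⟪g' y, y - x⟫ + ⟪g' x, x - y⟫ = ⟪g' x - g' y, x - y⟫ := by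
    rw [inner_sub_left]
    have : y - x = -(x - y) := by abel
    rw [this, inner_neg_right]
    ring
  have hβ' : (0:ℝ) < 1 / (2 * β) := by positivity
  have hq : 1 / (2 * β) * ‖g' x - g' y‖ ^ 2 + 1 / (2 * β) * ‖g' x - g' y‖ ^ 2
      = 1 / β * ‖g' x - g' y‖ ^ 2 := by
    field_simp; ring
  have hsum : 0 ≤ ⟪g' x - g' y, x - y⟫ - 1 / β * ‖g' x - g' y‖ ^ 2 := by
    linarith [h1, h2, e, hq]
  have : 1 / β * ‖g' x - g' y‖ ^ 2 ≤ ⟪g' x - g' y, x - y⟫ := by linarith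
  calc ‖g' x - g' y‖ ^ 2 = β * (1 / β * ‖g' x - g' y‖ ^ 2) := by
        field_simp
    _ ≤ β * ⟪g' x - g' y, x - y⟫ := by
        apply mul_le_mul_of_nonneg_left this hβ.le


lemma contraction_aux {β p η : ℝ} (hβ : 0 < β) (hp : 0 < p) (hη : 0 ≤ η)
    (hηβ : η * β ≤ 2 * p) (d Δ : H) (hcoco : ‖Δ‖ ^ 2 ≤ β * ⟪Δ, d⟫) :
    ‖p • d - η • Δ‖ ≤ p * ‖d‖ := by
  have hsq : ‖p • d - η • Δ‖ ^ 2 ≤ (p * ‖d‖) ^ 2 := by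
    have hexp : ‖p • d - η • Δ‖ ^ 2
        = p ^ 2 * ‖d‖ ^ 2 - 2 * (p * η * ⟪d, Δ⟫) + η ^ 2 * ‖Δ‖ ^ 2 := by
      rw [@norm_sub_sq_real H _ _ (p • d) (η • Δ), real_inner_smul_left,
        real_inner_smul_right, norm_smul, norm_smul, Real.norm_eq_abs,
        Real.norm_eq_abs, abs_of_pos hp, abs_of_nonneg hη]
      ring
    rw [hexp]
    have hid : ⟪Δ, d⟫ = ⟪d, Δ⟫ := real_inner_comm _ _
    rw [hid] at hcoco
    have hiΔ : 0 ≤ ⟪d, Δ⟫ := by nlinarith [sq_nonneg ‖Δ‖]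
    nlinarith [mul_le_mul_of_nonneg_left hcoco (mul_nonneg hη hη),
      mul_le_mul_of_nonneg_right hηβ (mul_nonneg hη hiΔ)]
  have h1 : (0:ℝ) ≤ ‖p • d - η • Δ‖ := norm_nonneg _
  have h2 : (0:ℝ) ≤ p * ‖d‖ := by positivity
  nlinarith [hsq, h1, h2]

include hβ hdiff hsmooth in
lemma key_contraction (hconv : ConvexOn ℝ Set.univ g) {p η : ℝ}
    (hp : 0 < p) (hη : 0 ≤ η) (hηβ : η * β ≤ 2 * p) (x y : H) :
    ‖p • (x - y) - η • (g' x - g' y)‖ ≤ p * ‖x - y‖ :=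
  contraction_aux hβ hp hη hηβ _ _ (coco g g' β hβ hdiff hsmooth hconv x y)

end aux

section helpers
variable {H : Type*} [NormedAddCommGroup H] [InnerProductSpace ℝ H]

lemma sum_smul_norm_le {m : ℕ} (c : Fin m → ℝ) (d : Fin m → H) (hc : ∀ l, 0 ≤ c l) :
    ‖∑ l, c l • d l‖ ≤ ∑ l, c l * ‖d l‖ := by
  refine (norm_sum_le _ _).trans ?_
  apply Finset.sum_le_sum
  intro l _
  rw [norm_smul, Real.norm_eq_abs, abs_of_nonneg (hc l)]

end helpers

/-- Backward matrix product `Q^{(t)} = P^T · P^{T-1} · ⋯ · P^{t+1}`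
(the identity matrix when `t = T`). -/
noncomputable def backProd {m : ℕ} (P : ℕ → Matrix (Fin m) (Fin m) ℝ) (T t : ℕ) :
    Matrix (Fin m) (Fin m) ℝ :=
  (((List.range' (t + 1) (T - t)).reverse.map P).prod)

lemma backProd_self {m : ℕ} (P : ℕ → Matrix (Fin m) (Fin m) ℝ) (t : ℕ) :
    backProd P t t = 1 := by
  simp [backProd, Nat.sub_self]

lemma backProd_succ_left {m : ℕ} (P : ℕ → Matrix (Fin m) (Fin m) ℝ) {T s : ℕ} (h : s ≤ T) :
    backProd P (T + 1) s = P (T + 1) * backProd P T s := by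
  have h1 : T + 1 - s = (T - s) + 1 := by omega
  have h2 : s + 1 + 1 * (T - s) = T + 1 := by omega
  rw [backProd, h1, List.range'_concat, h2, List.reverse_append]
  simp [backProd]

/-- local model, convex case, time-varying gossip matrices. -/
theorem dsgd_local_stability_convex
    {H : Type*} [NormedAddCommGroup H] [InnerProductSpace ℝ H]
    {Z : Type*} (f : Z → H → ℝ) (f' : Z → H → H)
    (L β : ℝ) (hL : 0 < L) (hβ : 0 < β)
    (hdiff : ∀ (z : Z) (x : H), HasFDerivAt (f z) ((innerSL ℝ) (f' z x)) x)
    (hlip : ∀ (z : Z) (x y : H), |f z x - f z y| ≤ L * ‖x - y‖)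
    (hgradbd : ∀ (z : Z) (x : H), ‖f' z x‖ ≤ L)
    (hsmooth : ∀ (z : Z) (x y : H), ‖f' z x - f' z y‖ ≤ β * ‖x - y‖)
    (hconv : ∀ z : Z, ConvexOn ℝ Set.univ (f z))
    (m n T : ℕ) (hm : 1 ≤ m) (hn : 1 ≤ n) (hT : 1 ≤ T)
    (P : ℕ → Matrix (Fin m) (Fin m) ℝ)
    (hPsym : ∀ t, 1 ≤ t → t ≤ T → ∀ i l, P t i l = P t l i)
    (hPpos : ∀ t, 1 ≤ t → t ≤ T → ∀ i l, 0 ≤ P t i l)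
    (hProw : ∀ t, 1 ≤ t → t ≤ T → ∀ i, ∑ l, P t i l = 1)
    (r : Fin m) (k : Fin n)
    (S S' : Fin m → Fin n → Z)
    (hSS' : ∀ (r' : Fin m) (k' : Fin n), (r', k') ≠ (r, k) → S' r' k' = S r' k')
    (j : ℕ → Fin m → Fin n)
    (η : ℕ → ℝ) (hηpos : ∀ t, 1 ≤ t → t ≤ T → 0 < η t)
    (hstep : ∀ t, 1 ≤ t → t ≤ T → ∀ i, 0 < P t i i ∧ η t ≤ 2 * P t i i / β)
    (w₀ : H) (w v : ℕ → Fin m → H)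
    (hw1 : ∀ i, w 1 i = w₀) (hv1 : ∀ i, v 1 i = w₀)
    (hwrec : ∀ t, 1 ≤ t → t ≤ T → ∀ i,
      w (t + 1) i = ∑ l, P t i l • w t l - η t • f' (S i (j t i)) (w t i))
    (hvrec : ∀ t, 1 ≤ t → t ≤ T → ∀ i,
      v (t + 1) i = ∑ l, P t i l • v t l - η t • f' (S' i (j t i)) (v t i))
    :
    ∀ z : Z,
      |f z (w (T + 1) r) - f z (v (T + 1) r)| ≤
        2 * L ^ 2 * ∑ t ∈ Finset.Icc 1 T, (backProd P T t) r r * η t * (if j t r = k then (1 : ℝ) else 0) := by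
  intro z
  set χ : ℕ → ℝ := fun s => if j s r = k then (1 : ℝ) else 0 with hχdef
  have hχnn : ∀ s, 0 ≤ χ s := by
    intro s; rw [hχdef]; dsimp only; split <;> norm_num
  have key : ∀ t : ℕ, t ≤ T → ∀ i, ‖w (t + 1) i - v (t + 1) i‖ ≤
      2 * L * ∑ s ∈ Finset.Icc 1 t, (backProd P t s) i r * η s * χ s := by
    intro t
    induction t with
    | zero =>
      intro _ i
      rw [hw1 i, hv1 i, Finset.Icc_eq_empty (by norm_num)]
      simp
    | succ t ih =>
      intro hle i
      have htT : t ≤ T := by omega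
      have h1t : 1 ≤ t + 1 := by omega
      have hPnn : ∀ a b, 0 ≤ P (t + 1) a b := hPpos (t + 1) h1t hle
      have hηnn : 0 ≤ η (t + 1) := (hηpos (t + 1) h1t hle).le
      -- recursion difference
      have hrec : w (t + 1 + 1) i - v (t + 1 + 1) i =
          (∑ l, P (t + 1) i l • (w (t + 1) l - v (t + 1) l))
          - η (t + 1) • (f' (S i (j (t + 1) i)) (w (t + 1) i)
              - f' (S' i (j (t + 1) i)) (v (t + 1) i)) := by
        rw [hwrec (t + 1) h1t hle i, hvrec (t + 1) h1t hle i]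
        simp only [smul_sub, Finset.sum_sub_distrib]
        abel
      -- one-step bound
      have hstepb : ‖w (t + 1 + 1) i - v (t + 1 + 1) i‖ ≤
          (∑ l, P (t + 1) i l * ‖w (t + 1) l - v (t + 1) l‖)
          + 2 * L * η (t + 1) * ((1 : Matrix (Fin m) (Fin m) ℝ) i r * χ (t + 1)) := by
        by_cases hc : (i, j (t + 1) i) = (r, k)
        · -- perturbed term : crude bound
          have hnorm : ‖w (t + 1 + 1) i - v (t + 1 + 1) i‖ ≤
              (∑ l, P (t + 1) i l * ‖w (t + 1) l - v (t + 1) l‖) + 2 * L * η (t + 1) := by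
            rw [hrec]
            refine (norm_sub_le _ _).trans ?_
            gcongr
            · exact sum_smul_norm_le _ _ (fun l => hPnn i l)
            · rw [norm_smul, Real.norm_eq_abs, abs_of_nonneg hηnn]
              have h1 := hgradbd (S i (j (t + 1) i)) (w (t + 1) i)
              have h2 := hgradbd (S' i (j (t + 1) i)) (v (t + 1) i)
              have h3 := norm_sub_le (f' (S i (j (t + 1) i)) (w (t + 1) i))
                (f' (S' i (j (t + 1) i)) (v (t + 1) i))
              nlinarith
          have hir : i = r := (Prod.ext_iff.mp hc).1
          have hjk : j (t + 1) i = k := (Prod.ext_iff.mp hc).2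
          have h1 : (1 : Matrix (Fin m) (Fin m) ℝ) i r = 1 := by
            rw [hir]; exact Matrix.one_apply_eq r
          have h2 : χ (t + 1) = 1 := by rw [hχdef]; simp [← hir, hjk]
          rw [h1, h2, mul_one, mul_one]
          exact hnorm
        · -- same sample : contraction
          have hSeq : S' i (j (t + 1) i) = S i (j (t + 1) i) := hSS' _ _ hc
          rw [hSeq] at hrec
          set g : H → ℝ := f (S i (j (t + 1) i)) with hg
          set g' : H → H := f' (S i (j (t + 1) i)) with hg'
          set d : Fin m → H := fun l => w (t + 1) l - v (t + 1) l with hd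
          have hsplit : (∑ l, P (t + 1) i l • d l)
              = P (t + 1) i i • d i + ∑ l ∈ Finset.univ.erase i, P (t + 1) i l • d l :=
            (Finset.add_sum_erase _ _ (Finset.mem_univ i)).symm
          have hexpr : w (t + 1 + 1) i - v (t + 1 + 1) i =
              (P (t + 1) i i • d i
                - η (t + 1) • (g' (w (t + 1) i) - g' (v (t + 1) i)))
              + ∑ l ∈ Finset.univ.erase i, P (t + 1) i l • d l := by
            rw [hrec, hsplit]; abel
          have hp : 0 < P (t + 1) i i := (hstep (t + 1) h1t hle i).1
          have hηβ : η (t + 1) * β ≤ 2 * P (t + 1) i i := by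
            have := (hstep (t + 1) h1t hle i).2
            rw [le_div_iff₀ hβ] at this
            linarith
          have hcontr : ‖P (t + 1) i i • d i
              - η (t + 1) • (g' (w (t + 1) i) - g' (v (t + 1) i))‖
              ≤ P (t + 1) i i * ‖d i‖ := by
            have := key_contraction g g' β hβ (hdiff (S i (j (t + 1) i)))
              (hsmooth (S i (j (t + 1) i))) (hconv (S i (j (t + 1) i)))
              hp hηnn hηβ (w (t + 1) i) (v (t + 1) i)
            simpa [hd] using this
          have hbound : ‖w (t + 1 + 1) i - v (t + 1 + 1) i‖ ≤
              ∑ l, P (t + 1) i l * ‖d l‖ := by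
            rw [hexpr]
            refine (norm_add_le _ _).trans ?_
            have herase : ‖∑ l ∈ Finset.univ.erase i, P (t + 1) i l • d l‖
                ≤ ∑ l ∈ Finset.univ.erase i, P (t + 1) i l * ‖d l‖ := by
              refine (norm_sum_le _ _).trans ?_
              apply Finset.sum_le_sum
              intro l _
              rw [norm_smul, Real.norm_eq_abs, abs_of_nonneg (hPnn i l)]
            have hmerge : P (t + 1) i i * ‖d i‖
                + ∑ l ∈ Finset.univ.erase i, P (t + 1) i l * ‖d l‖
                = ∑ l, P (t + 1) i l * ‖d l‖ :=
              Finset.add_sum_erase Finset.univ (fun l => P (t + 1) i l * ‖d l‖)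
                (Finset.mem_univ i)
            linarith [hcontr, herase]
          refine hbound.trans ?_
          have : 0 ≤ 2 * L * η (t + 1) * ((1 : Matrix (Fin m) (Fin m) ℝ) i r * χ (t + 1)) := by
            have h1r : 0 ≤ (1 : Matrix (Fin m) (Fin m) ℝ) i r := by
              rw [Matrix.one_apply]; split <;> norm_num
            positivity
          linarith
      -- combine with induction hypothesis
      have hsum : ∑ l, P (t + 1) i l * ‖w (t + 1) l - v (t + 1) l‖ ≤
          2 * L * ∑ s ∈ Finset.Icc 1 t, (backProd P (t + 1) s) i r * η s * χ s := by
        have hle2 : ∑ l, P (t + 1) i l * ‖w (t + 1) l - v (t + 1) l‖ ≤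
            ∑ l, P (t + 1) i l *
              (2 * L * ∑ s ∈ Finset.Icc 1 t, (backProd P t s) l r * η s * χ s) := by
          apply Finset.sum_le_sum
          intro l _
          exact mul_le_mul_of_nonneg_left (ih htT l) (hPnn i l)
        refine hle2.trans (le_of_eq ?_)
        rw [Finset.mul_sum]
        simp only [Finset.mul_sum]
        rw [Finset.sum_comm]
        apply Finset.sum_congr rfl
        intro s hs
        have hst : s ≤ t := (Finset.mem_Icc.mp hs).2
        rw [backProd_succ_left P hst, Matrix.mul_apply, Finset.sum_mul, Finset.sum_mul,
          Finset.mul_sum]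
        apply Finset.sum_congr rfl
        intro l _
        ring
      -- final assembly for the inductive step
      have hone : (backProd P (t + 1) (t + 1)) i r = (1 : Matrix (Fin m) (Fin m) ℝ) i r := by
        rw [backProd_self]
      calc ‖w (t + 1 + 1) i - v (t + 1 + 1) i‖
          ≤ (∑ l, P (t + 1) i l * ‖w (t + 1) l - v (t + 1) l‖)
            + 2 * L * η (t + 1) * ((1 : Matrix (Fin m) (Fin m) ℝ) i r * χ (t + 1)) := hstepb
        _ ≤ 2 * L * (∑ s ∈ Finset.Icc 1 t, (backProd P (t + 1) s) i r * η s * χ s)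
            + 2 * L * η (t + 1) * ((1 : Matrix (Fin m) (Fin m) ℝ) i r * χ (t + 1)) := by
            linarith
        _ = 2 * L * ∑ s ∈ Finset.Icc 1 (t + 1), (backProd P (t + 1) s) i r * η s * χ s := by
            rw [Finset.sum_Icc_succ_top (by omega : 1 ≤ t + 1), hone]
            ring
  have hkey := key T (le_refl T) r
  have hlipz := hlip z (w (T + 1) r) (v (T + 1) r)
  calc |f z (w (T + 1) r) - f z (v (T + 1) r)|
      ≤ L * ‖w (T + 1) r - v (T + 1) r‖ := hlipz
    _ ≤ L * (2 * L * ∑ s ∈ Finset.Icc 1 T, (backProd P T s) r r * η s * χ s) := by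
        exact mul_le_mul_of_nonneg_left hkey hL.le
    _ = 2 * L ^ 2 * ∑ s ∈ Finset.Icc 1 T,
          (backProd P T s) r r * η s * (if j s r = k then (1 : ℝ) else 0) := by
        rw [hχdef]; ring
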